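/- Let (a_m) be a sequence of real numbers satisfying, for all m ≥ 2, the relation a_m = a_{m-1} + 2Δ·a_{m-2} + 2Δ·2·a_{m-3} + ... + 2Δ·(m-2)·a_1 + 2Δ·(m-1) + 2Δ·m, i.e., a_m = a_{m-1} + 2Δ·(Σ_{j=1}^{m-2} j·a_{m-1-j}) + 2Δ(2m-1), where Δ is a fixed positive real. Then for all m ≥ 4, a_m = 3a_{m-1} + (2Δ−3)a_{m-2} + a_{m-3}. -/

import Mathlib

lemma reindex_sum (a : ℕ → ℝ) (p : ℕ) :
    ∑ j ∈ Finset.Icc 1 p, (j : ℝ) * a (p + 1 - j)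
      = ∑ k ∈ Finset.Icc 1 p, ((p + 1 - k : ℕ) : ℝ) * a k := by
  apply Finset.sum_nbij' (i := fun j => p + 1 - j) (j := fun k => p + 1 - k)
  · intro j hj; simp only [Finset.mem_Icc] at *; omega
  · intro j hj; simp only [Finset.mem_Icc] at *; omega
  · intro j hj; simp only [Finset.mem_Icc] at hj; omega
  · intro j hj; simp only [Finset.mem_Icc] at hj; omega
  · intro j hj
    simp only [Finset.mem_Icc] at hj
    have h1 : p + 1 - (p + 1 - j) = j := by omega
    rw [h1]

/-- From the full-history recurrence
`aₘ = aₘ₋₁ + 2Δ·(Σ_{j=1}^{m-2} j·aₘ₋₁₋ⱼ) + 2Δ(2m−1)` (for all m ≥ 2)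
one deduces the linear recurrence
`aₘ = 3aₘ₋₁ + (2Δ−3)aₘ₋₂ + aₘ₋₃` for all m ≥ 4. -/
theorem recurrence_reduction (Δ : ℝ) (hΔ : 0 < Δ) (a : ℕ → ℝ)
    (hrec : ∀ m : ℕ, 2 ≤ m →
      a m = a (m - 1) + 2 * Δ * (∑ j ∈ Finset.Icc 1 (m - 2), (j : ℝ) * a (m - 1 - j))
            + 2 * Δ * (2 * (m : ℝ) - 1)) :
    ∀ m : ℕ, 4 ≤ m →
      a m = 3 * a (m - 1) + (2 * Δ - 3) * a (m - 2) + a (m - 3) := by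
  intro m hm
  obtain ⟨n, rfl⟩ : ∃ n, m = n + 4 := ⟨m - 4, by omega⟩
  have h1 := hrec (n + 4) (by omega)
  have h2 := hrec (n + 3) (by omega)
  have h3 := hrec (n + 2) (by omega)
  simp only [show n + 4 - 1 = n + 3 from rfl, show n + 4 - 2 = n + 2 from rfl,
    show n + 3 - 1 = n + 2 from rfl, show n + 3 - 2 = n + 1 from rfl,
    show n + 2 - 1 = n + 1 from rfl, show n + 2 - 2 = n from rfl,
    show n + 4 - 3 = n + 1 from rfl] at h1 h2 h3 ⊢
  have e1 : ∀ j ∈ Finset.Icc 1 (n + 2), (j : ℝ) * a (n + 3 - j) = (j : ℝ) * a (n + 2 + 1 - j) :=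
    fun j hj => rfl
  have e2 : ∀ j ∈ Finset.Icc 1 (n + 1), (j : ℝ) * a (n + 2 - j) = (j : ℝ) * a (n + 1 + 1 - j) :=
    fun j hj => rfl
  rw [Finset.sum_congr rfl e1, reindex_sum a (n + 2)] at h1
  rw [Finset.sum_congr rfl e2, reindex_sum a (n + 1)] at h2
  rw [reindex_sum a n] at h3
  have hsum :
      (∑ k ∈ Finset.Icc 1 (n + 2), ((n + 2 + 1 - k : ℕ) : ℝ) * a k)
        - 2 * (∑ k ∈ Finset.Icc 1 (n + 1), ((n + 1 + 1 - k : ℕ) : ℝ) * a k)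
        + (∑ k ∈ Finset.Icc 1 n, ((n + 1 - k : ℕ) : ℝ) * a k) = a (n + 2) := by
    rw [Finset.sum_Icc_succ_top (by omega : 1 ≤ n + 2),
        Finset.sum_Icc_succ_top (by omega : 1 ≤ n + 1),
        Finset.sum_Icc_succ_top (by omega : 1 ≤ n + 1)]
    have hz : (∑ k ∈ Finset.Icc 1 n, ((n + 2 + 1 - k : ℕ) : ℝ) * a k)
        - 2 * (∑ k ∈ Finset.Icc 1 n, ((n + 1 + 1 - k : ℕ) : ℝ) * a k)
        + (∑ k ∈ Finset.Icc 1 n, ((n + 1 - k : ℕ) : ℝ) * a k) = 0 := by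
      rw [Finset.mul_sum, ← Finset.sum_sub_distrib, ← Finset.sum_add_distrib]
      apply Finset.sum_eq_zero
      intro k hk
      simp only [Finset.mem_Icc] at hk
      rw [Nat.cast_sub (by omega), Nat.cast_sub (by omega), Nat.cast_sub (by omega)]
      push_cast
      ring
    have h12 : ((n + 2 + 1 - (n + 1) : ℕ) : ℝ) = 2 := by norm_num
    have h11 : ((n + 2 + 1 - (n + 2) : ℕ) : ℝ) = 1 := by norm_num
    have h21 : ((n + 1 + 1 - (n + 1) : ℕ) : ℝ) = 1 := by norm_num
    rw [h12, h11, h21]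
    nlinarith [hz]
  push_cast at h1 h2 h3
  linear_combination h1 - 2 * h2 + h3 + 2 * Δ * hsum
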